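/- Let D be a division ring with center F = Z(D), and let D((t)) be the Laurent series ring over D in a central variable t. Let u, v ∈ D with v ≠ 0. Then the element u + vt of D((t)) is not algebraic over F: there is no nonzero polynomial p with coefficients in F (regarded as constant Laurent series) such that p(u + vt) = 0 in D((t)). -/

import Mathlib

open HahnSeries Polynomial

private lemma pow_coeff_aux (D : Type*) [DivisionRing D] (u v : D) :
    ∀ (k : ℕ),
      ((((HahnSeries.C u : LaurentSeries D) +
          (HahnSeries.C v : LaurentSeries D) * HahnSeries.single (1 : ℤ) (1 : D)) ^ k).coeff
          (k : ℤ) = v ^ k) ∧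
      (∀ n : ℤ, (k : ℤ) < n →
        (((HahnSeries.C u : LaurentSeries D) +
          (HahnSeries.C v : LaurentSeries D) * HahnSeries.single (1 : ℤ) (1 : D)) ^ k).coeff n
          = 0) := by
  intro k
  set w : LaurentSeries D := (HahnSeries.C u : LaurentSeries D) +
    (HahnSeries.C v : LaurentSeries D) * HahnSeries.single (1 : ℤ) (1 : D) with hw
  have key : ∀ (k : ℕ) (n : ℤ), (w ^ (k+1)).coeff n
      = (w ^ k).coeff n * u + (w ^ k).coeff (n - 1) * v := by
    intro k n
    have hsplit : w ^ (k+1) = w ^ k * HahnSeries.single (0 : ℤ) u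
        + w ^ k * HahnSeries.single (0 : ℤ) v * HahnSeries.single (1 : ℤ) (1 : D) := by
      rw [pow_succ, hw]
      simp only [HahnSeries.C_apply]
      rw [mul_add, ← mul_assoc]
    rw [hsplit, HahnSeries.coeff_add, HahnSeries.coeff_mul_single_zero]
    congr 1
    have h2 : ((w ^ k * HahnSeries.single (0:ℤ) v) * HahnSeries.single (1:ℤ) (1:D)).coeff
        ((n-1) + 1) = (w ^ k * HahnSeries.single (0:ℤ) v).coeff (n-1) * 1 :=
      HahnSeries.coeff_mul_single_add
    rw [sub_add_cancel] at h2
    rw [h2, HahnSeries.coeff_mul_single_zero, mul_one]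
  induction k with
  | zero =>
    constructor
    · simp [HahnSeries.coeff_one]
    · intro n hn
      rw [pow_zero, HahnSeries.coeff_one, if_neg]
      omega
  | succ k ih =>
    obtain ⟨ih1, ih2⟩ := ih
    constructor
    · rw [key k ((k+1 : ℕ) : ℤ)]
      have e1 : (w ^ k).coeff ((k+1 : ℕ) : ℤ) = 0 := by
        apply ih2; push_cast; omega
      have e2 : ((k+1 : ℕ) : ℤ) - 1 = (k : ℤ) := by push_cast; omega
      rw [e1, e2, ih1, zero_mul, zero_add, pow_succ]
    · intro n hn
      rw [key k n]
      have e1 : (w ^ k).coeff n = 0 := by apply ih2; omega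
      have e2 : (w ^ k).coeff (n - 1) = 0 := by apply ih2; omega
      rw [e1, e2, zero_mul, zero_mul, zero_add]

/-- Let `D` be a division ring with center `F`, and let `D((t))` be the Laurent series
ring over `D` in a central variable `t`. For `u v : D` with `v ≠ 0`, the element
`u + v·t` of `D((t))` is not algebraic over `F`: no nonzero polynomial with coefficients
in `F` (regarded as constant Laurent series) vanishes at `u + v·t`. -/
theorem not_algebraic_add_mul_single
    (D : Type*) [DivisionRing D] (u v : D) (hv : v ≠ 0) :
    ¬ ∃ p : Polynomial D, p ≠ 0 ∧ (∀ i, p.coeff i ∈ Subring.center D) ∧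
        Polynomial.eval
          ((HahnSeries.C u : LaurentSeries D) +
            (HahnSeries.C v : LaurentSeries D) * HahnSeries.single (1 : ℤ) (1 : D))
          (p.map (HahnSeries.C : D →+* LaurentSeries D)) = 0 := by
  rintro ⟨p, hp, -, heval⟩
  set w : LaurentSeries D := (HahnSeries.C u : LaurentSeries D) +
    (HahnSeries.C v : LaurentSeries D) * HahnSeries.single (1 : ℤ) (1 : D) with hw
  set m := p.natDegree with hm
  have hsum : (p.map (HahnSeries.C : D →+* LaurentSeries D)).eval w
      = ∑ i ∈ Finset.range (m + 1), HahnSeries.C (p.coeff i) * w ^ i := by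
    rw [Polynomial.eval_eq_sum_range' (lt_of_le_of_lt
      Polynomial.natDegree_map_le (Nat.lt_succ_self m))]
    exact Finset.sum_congr rfl fun i _ => by rw [Polynomial.coeff_map]
  have hcoeff : ((p.map (HahnSeries.C : D →+* LaurentSeries D)).eval w).coeff (m : ℤ)
      = p.coeff m * v ^ m := by
    rw [hsum, ← HahnSeries.coeff.addMonoidHom_apply, map_sum]
    have step : ∀ i ∈ Finset.range (m + 1),
        (HahnSeries.coeff.addMonoidHom ((m : ℤ))) (HahnSeries.C (p.coeff i) * w ^ i)
        = if i = m then p.coeff m * v ^ m else 0 := by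
      intro i hi
      rw [Finset.mem_range, Nat.lt_succ_iff] at hi
      simp only [HahnSeries.coeff.addMonoidHom_apply, HahnSeries.C_apply,
        HahnSeries.single_zero_mul_eq_smul, HahnSeries.coeff_smul, smul_eq_mul]
      by_cases h : i = m
      · rw [if_pos h, h, (pow_coeff_aux D u v m).1]
      · rw [if_neg h, (pow_coeff_aux D u v i).2 (m : ℤ) (by omega), mul_zero]
    rw [Finset.sum_congr rfl step, Finset.sum_ite_eq' (Finset.range (m+1)) m
      (fun _ => p.coeff m * v ^ m)]
    simp
  rw [heval] at hcoeff
  have hlc : p.coeff m ≠ 0 := Polynomial.leadingCoeff_ne_zero.mpr hp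
  exact (mul_ne_zero hlc (pow_ne_zero m hv)) hcoeff.symm
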